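/- For any two-qubit density matrix ρ, the state inversion inequality A_1(ρ) − A_2(ρ) ≤ 1 holds, where A_1 and A_2 are the one- and two-body sector lengths. -/

import Mathlib

open Matrix BigOperators Finset ComplexOrder

/-- The Pauli matrices, indexed by `Fin 4`: identity, X, Y, Z. -/
noncomputable def pauli : Fin 4 → Matrix (Fin 2) (Fin 2) ℂ
  | 0 => 1
  | 1 => !![0, 1; 1, 0]
  | 2 => !![0, -Complex.I; Complex.I, 0]
  | 3 => !![1, 0; 0, -1]

/-- An `n`-qubit Pauli word: the tensor product of the Pauli matrices `pauli (w i)`,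
realized as a matrix indexed by `Fin n → Fin 2`. -/
noncomputable def pWord {n : ℕ} (w : Fin n → Fin 4) :
    Matrix (Fin n → Fin 2) (Fin n → Fin 2) ℂ :=
  Matrix.of fun x y => ∏ i, pauli (w i) (x i) (y i)

/-- The weight of a Pauli word: the number of non-identity tensor factors. -/
def wt {n : ℕ} (w : Fin n → Fin 4) : ℕ :=
  (Finset.univ.filter fun i => w i ≠ 0).card

/-- The `k`-th sector length of an `n`-qubit matrix:
the sum of squared Pauli expectation values over Pauli words of weight `k`. -/
noncomputable def sector (n k : ℕ) (ρ : Matrix (Fin n → Fin 2) (Fin n → Fin 2) ℂ) : ℝ :=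
  ∑ w ∈ Finset.univ.filter fun w : Fin n → Fin 4 => wt w = k,
    ((pWord w * ρ).trace.re) ^ 2

/-- An `n`-qubit quantum state: positive semidefinite with unit trace. -/
def IsState {n : ℕ} (ρ : Matrix (Fin n → Fin 2) (Fin n → Fin 2) ℂ) : Prop :=
  ρ.PosSemidef ∧ ρ.trace = 1

lemma pauli_conj (k : Fin 4) (i j : Fin 2) : (starRingEnd ℂ) (pauli k j i) = pauli k i j := by
  fin_cases k <;> fin_cases i <;> fin_cases j <;>
    simp [pauli, Matrix.one_apply]

lemma pWord_herm {n : ℕ} (w : Fin n → Fin 4) : (pWord w)ᴴ = pWord w := by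
  ext x y
  simp only [conjTranspose_apply, pWord, of_apply, Complex.star_def, map_prod]
  exact Finset.prod_congr rfl fun i _ => pauli_conj _ _ _

lemma trace_pWord_real {n : ℕ} (w : Fin n → Fin 4) (ρ : Matrix (Fin n → Fin 2) (Fin n → Fin 2) ℂ)
    (hρ : ρ.IsHermitian) : ((pWord w * ρ).trace) = (((pWord w * ρ).trace).re : ℂ) := by
  have h : star ((pWord w * ρ).trace) = (pWord w * ρ).trace := by
    rw [← trace_conjTranspose, conjTranspose_mul, pWord_herm, hρ.eq, trace_mul_comm]
  exact (Complex.conj_eq_iff_re.mp h).symm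

lemma sum_pi_two {M : Type*} [AddCommMonoid M] {k : ℕ} (f : (Fin 2 → Fin k) → M) :
    ∑ w, f w = ∑ a : Fin k, ∑ b : Fin k, f ![a, b] := by
  rw [← (finTwoArrowEquiv (Fin k)).symm.sum_comp]
  simp [Fintype.sum_prod_type, finTwoArrowEquiv]

lemma psd_trace_nonneg {m : Type*} [Fintype m] [DecidableEq m]
    {M : Matrix m m ℂ} (h : M.PosSemidef) : 0 ≤ M.trace := by
  rw [Matrix.trace]
  apply Finset.sum_nonneg
  intro i _
  exact h.diag_nonneg

set_option maxHeartbeats 4000000 in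
lemma key_identity (ρ : Matrix (Fin 2 → Fin 2) (Fin 2 → Fin 2) ℂ) :
    (∑ w ∈ Finset.univ.filter fun w : Fin 2 → Fin 4 => wt w = 1, ((pWord w * ρ).trace)^2)
    - (∑ w ∈ Finset.univ.filter fun w : Fin 2 → Fin 4 => wt w = 2, ((pWord w * ρ).trace)^2)
    = (ρ.trace)^2 - 4 * (ρ * (pWord ![2,2] * ρᵀ * pWord ![2,2])).trace := by
  rw [Finset.sum_filter, Finset.sum_filter, sum_pi_two, sum_pi_two]
  simp only [Matrix.trace, Matrix.diag, Matrix.mul_apply, Matrix.transpose_apply,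
    pWord, Matrix.of_apply, sum_pi_two, Fin.sum_univ_two, Fin.sum_univ_four,
    Fin.prod_univ_two, Matrix.cons_val_zero, Matrix.cons_val_one, Matrix.head_cons]
  simp (config := { decide := true }) only [wt, Finset.filter]
  norm_num [pauli, Matrix.one_apply, Complex.I_sq]
  ring_nf
  simp only [Complex.I_sq]
  ring

lemma sector_eq_re (ρ : Matrix (Fin 2 → Fin 2) (Fin 2 → Fin 2) ℂ)
    (h : ρ.IsHermitian) (k : ℕ) :
    sector 2 k ρ =
      (∑ w ∈ Finset.univ.filter fun w : Fin 2 → Fin 4 => wt w = k,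
        ((pWord w * ρ).trace)^2).re := by
  rw [sector, Complex.re_sum]
  refine Finset.sum_congr rfl fun w _ => ?_
  conv_rhs => rw [trace_pWord_real w ρ h, ← Complex.ofReal_pow, Complex.ofReal_re]

/-- The state inversion inequality for two qubits: `A₁(ρ) − A₂(ρ) ≤ 1`. -/
theorem two_qubit_state_inversion (ρ : Matrix (Fin 2 → Fin 2) (Fin 2 → Fin 2) ℂ)
    (hρ : IsState ρ) : sector 2 1 ρ - sector 2 2 ρ ≤ 1 := by
  obtain ⟨hpsd, htr⟩ := hρ
  set S := pWord ![(2 : Fin 4), 2] with hS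
  have hSH : Sᴴ = S := pWord_herm _
  have htilde : (S * ρᵀ * S).PosSemidef := by
    have := (hpsd.transpose).mul_mul_conjTranspose_same S
    rwa [hSH] at this
  -- trace (ρ * ρ̃) ≥ 0
  obtain ⟨B, hB⟩ : ∃ B : Matrix (Fin 2 → Fin 2) (Fin 2 → Fin 2) ℂ, ρ = Bᴴ * B := by
    open scoped MatrixOrder in
    have h0 : 0 ≤ ρ := Matrix.nonneg_iff_posSemidef.mpr hpsd
    open scoped MatrixOrder in
    refine ⟨CFC.sqrt ρ, ?_⟩
    open scoped MatrixOrder in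
    show ρ = star (CFC.sqrt ρ) * CFC.sqrt ρ
    open scoped MatrixOrder in
    rw [(CFC.sqrt_nonneg ρ).isSelfAdjoint.star_eq, CFC.sqrt_mul_sqrt_self ρ h0]
  have hT : 0 ≤ (ρ * (S * ρᵀ * S)).trace := by
    have h1 : (ρ * (S * ρᵀ * S)).trace = (B * (S * ρᵀ * S) * Bᴴ).trace := by
      rw [hB, mul_assoc, trace_mul_comm, ← mul_assoc, ← mul_assoc]
    rw [h1]
    exact psd_trace_nonneg (htilde.mul_mul_conjTranspose_same B)
  have hre : 0 ≤ ((ρ * (S * ρᵀ * S)).trace).re ∧ ((ρ * (S * ρᵀ * S)).trace).im = 0 := by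
    rw [Complex.le_def] at hT
    simpa using ⟨hT.1, hT.2.symm⟩
  have hkey := key_identity ρ
  have h1 := sector_eq_re ρ hpsd.isHermitian 1
  have h2 := sector_eq_re ρ hpsd.isHermitian 2
  rw [h1, h2, ← Complex.sub_re, hkey, htr]
  simp only [one_pow, Complex.sub_re, Complex.one_re, Complex.mul_re]
  norm_num
  linarith [hre.1]
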